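/- Let A ∈ ℝ^{n×n} and B ∈ ℝ^{n×m} be such that there exists K ∈ ℝ^{m×n} with (A+BK)^k → 0 as k → ∞, let 𝒞 ⊆ ℝ^{n+m} be a proper C-set, and let S ⊆ ℝⁿ be a C-set. Let (𝒫_k)_{k≥1} be the iterates 𝒫₁ = P_x(𝒞* ⊕ MᵀS)*, 𝒫_{k+1} = P_x(𝒞* ⊕ Mᵀ𝒫_k*)* for k ≥ 1. If either S ⊆ 𝒫₁* or 𝒫₁* ⊆ S, then there exists a proper C-set 𝒫_∞ ⊆ ℝⁿ such that the Hausdorff distance between 𝒫_k and 𝒫_∞ tends to 0 as k → ∞. -/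

import Mathlib

open Pointwise Filter Topology Matrix

noncomputable section

/-- ℝⁿ with the standard (Euclidean) inner product. -/
abbrev Rsp (n : ℕ) := EuclideanSpace ℝ (Fin n)

/-- ℝ^{n+m} realized as the L²-product ℝⁿ × ℝᵐ. -/
abbrev Rsp2 (n m : ℕ) := WithLp 2 (Rsp n × Rsp m)

/-- A C-set: compact, convex, containing the origin. -/
def IsCSet {E : Type*} [NormedAddCommGroup E] [NormedSpace ℝ E] (X : Set E) : Prop :=
  IsCompact X ∧ Convex ℝ X ∧ (0 : E) ∈ X

/-- A proper C-set: a C-set containing the origin in its interior. -/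
def IsProperCSet {E : Type*} [NormedAddCommGroup E] [NormedSpace ℝ E] (X : Set E) : Prop :=
  IsCSet X ∧ (0 : E) ∈ interior X

/-- The polar set 𝒳* = {y : ⟨y,x⟩ ≤ 1 for all x ∈ 𝒳}. -/
def polarSet {E : Type*} [NormedAddCommGroup E] [InnerProductSpace ℝ E] (X : Set E) : Set E :=
  {y | ∀ x ∈ X, inner ℝ y x ≤ (1 : ℝ)}

/-- The Minkowski (gauge) function γ(𝒳,y) = inf{η ≥ 0 : y ∈ η𝒳}. -/
def mgauge {E : Type*} [NormedAddCommGroup E] [NormedSpace ℝ E] (X : Set E) (y : E) : ℝ :=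
  sInf {η : ℝ | 0 ≤ η ∧ y ∈ η • X}

variable {n m : ℕ}

/-- The map M = (A B) : ℝ^{n+m} → ℝⁿ, M(x,u) = Ax + Bu. -/
def Mfwd (A : Matrix (Fin n) (Fin n) ℝ) (B : Matrix (Fin n) (Fin m) ℝ) (w : Rsp2 n m) : Rsp n :=
  Matrix.toEuclideanLin A w.ofLp.1 + Matrix.toEuclideanLin B w.ofLp.2

/-- The transpose map Mᵀ : ℝⁿ → ℝ^{n+m}, Mᵀp = (Aᵀp, Bᵀp). -/
def Mtr (A : Matrix (Fin n) (Fin n) ℝ) (B : Matrix (Fin n) (Fin m) ℝ) (p : Rsp n) : Rsp2 n m :=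
  WithLp.toLp 2 (Matrix.toEuclideanLin Aᵀ p, Matrix.toEuclideanLin Bᵀ p)

/-- The projection P_x : ℝ^{n+m} → ℝⁿ, (x,u) ↦ x. -/
def Pxproj : Rsp2 n m → Rsp n := fun w => w.ofLp.1

/-! ### Auxiliary lemmas about polar sets -/

section PolarLemmas

variable {E : Type*} [NormedAddCommGroup E] [InnerProductSpace ℝ E]

lemma zero_mem_polarSet (X : Set E) : (0 : E) ∈ polarSet X := by
  intro x hx; simp [inner_zero_left]

lemma polarSet_antitone {X Y : Set E} (h : X ⊆ Y) : polarSet Y ⊆ polarSet X :=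
  fun y hy x hx => hy x (h hx)

lemma polarSet_convex (X : Set E) : Convex ℝ (polarSet X) := by
  intro y hy z hz a b ha hb hab x hx
  calc inner ℝ (a • y + b • z) x = a * inner ℝ y x + b * inner ℝ z x := by
        rw [inner_add_left, real_inner_smul_left, real_inner_smul_left]
    _ ≤ a * 1 + b * 1 := by
        have h1 := hy x hx; have h2 := hz x hx; nlinarith
    _ = 1 := by linarith

lemma polarSet_closed (X : Set E) : IsClosed (polarSet X) := by
  have : polarSet X = ⋂ x ∈ X, {y : E | inner ℝ y x ≤ (1:ℝ)} := by
    ext y; simp [polarSet]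
  rw [this]
  exact isClosed_biInter fun x _ => isClosed_le (by continuity) continuous_const

lemma subset_bipolar (X : Set E) : X ⊆ polarSet (polarSet X) := by
  intro x hx y hy
  rw [real_inner_comm]; exact hy x hx

lemma polarSet_subset_closedBall {X : Set E} {r : ℝ} (hr : 0 < r)
    (h : Metric.closedBall 0 r ⊆ X) : polarSet X ⊆ Metric.closedBall 0 (1/r) := by
  intro y hy
  rcases eq_or_ne y 0 with rfl | hy0
  · simp [Metric.mem_closedBall]; positivity
  · have hz : ((r / ‖y‖) • y) ∈ Metric.closedBall (0:E) r := by
      simp only [Metric.mem_closedBall, dist_zero_right, norm_smul, Real.norm_eq_abs]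
      rw [abs_of_nonneg (by positivity)]
      rw [div_mul_cancel₀ _ (norm_ne_zero_iff.2 hy0)]
    have := hy _ (h hz)
    rw [real_inner_smul_right, real_inner_self_eq_norm_sq] at this
    have hn : 0 < ‖y‖ := norm_pos_iff.2 hy0
    rw [Metric.mem_closedBall, dist_zero_right]
    have h2 : r / ‖y‖ * ‖y‖ ^ 2 = r * ‖y‖ := by field_simp
    rw [h2] at this
    rw [le_div_iff₀ hr]; linarith

lemma closedBall_subset_polarSet {X : Set E} {R : ℝ} (hR : 0 < R)
    (h : X ⊆ Metric.closedBall 0 R) : Metric.closedBall 0 (1/R) ⊆ polarSet X := by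
  intro y hy x hx
  have h1 : ‖y‖ ≤ 1/R := by simpa using hy
  have h2 : ‖x‖ ≤ R := by simpa using h hx
  calc inner ℝ y x ≤ ‖y‖ * ‖x‖ := real_inner_le_norm y x
    _ ≤ (1/R) * R := by nlinarith [norm_nonneg y, norm_nonneg x, hR]
    _ = 1 := by field_simp

end PolarLemmas

/-! ### Hausdorff convergence of monotone sequences of compact sets -/

section HausdorffLemmas

open Metric

variable {α : Type*} [MetricSpace α]

lemma tendsto_haus_of_key {P : ℕ → Set α} {L : Set α}
    (key : ∀ ε : ℝ, 0 < ε → ∃ N, ∀ k ≥ N, hausdorffDist (P k) L ≤ ε) :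
    Tendsto (fun k => hausdorffDist (P k) L) atTop (nhds 0) := by
  rw [Metric.tendsto_atTop]
  intro ε hε
  obtain ⟨N, hN⟩ := key (ε/2) (by linarith)
  exact ⟨N, fun k hk => by
    rw [Real.dist_eq, abs_of_nonneg (by simpa using Metric.hausdorffDist_nonneg)]
    have := hN k hk; linarith⟩

lemma haus_decr (P : ℕ → Set α) (hcpt : ∀ k, IsCompact (P k))
    (hne : ∀ k, (P k).Nonempty) (hdec : ∀ k, P (k+1) ⊆ P k) :
    Tendsto (fun k => hausdorffDist (P k) (⋂ j, P j)) atTop (nhds 0) := by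
  set L := ⋂ j, P j with hL
  have hmono : ∀ {j k}, j ≤ k → P k ⊆ P j := fun {j k} h =>
    antitone_nat_of_succ_le hdec h
  apply tendsto_haus_of_key
  intro ε hε
  have hsub : ∃ N, P N ⊆ thickening ε L := by
    by_contra hcon
    push_neg at hcon
    have hQne : ∀ k, (P k \ thickening ε L).Nonempty := by
      intro k
      rcases Set.not_subset.1 (hcon k) with ⟨x, hx1, hx2⟩
      exact ⟨x, hx1, hx2⟩
    have hQdec : ∀ k, P (k+1) \ thickening ε L ⊆ P k \ thickening ε L :=
      fun k => Set.diff_subset_diff_left (hdec k)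
    have hQcl : ∀ k, IsClosed (P k \ thickening ε L) := fun k =>
      (hcpt k).isClosed.sdiff isOpen_thickening
    have := IsCompact.nonempty_iInter_of_sequence_nonempty_isCompact_isClosed
      (fun k => P k \ thickening ε L) hQdec hQne
      ((hcpt 0).of_isClosed_subset (hQcl 0) Set.diff_subset) hQcl
    obtain ⟨x, hx⟩ := this
    simp only [Set.mem_iInter, Set.mem_diff] at hx
    have hxL : x ∈ L := Set.mem_iInter.2 fun j => (hx j).1
    exact (hx 0).2 (self_subset_thickening hε L hxL)
  obtain ⟨N, hN⟩ := hsub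
  refine ⟨N, fun k hk => ?_⟩
  apply hausdorffDist_le_of_mem_dist hε.le
  · intro x hx
    have : x ∈ thickening ε L := hN (hmono hk hx)
    rw [mem_thickening_iff] at this
    obtain ⟨y, hy, hd⟩ := this
    exact ⟨y, hy, hd.le⟩
  · intro y hy
    have : y ∈ P k := Set.mem_iInter.1 hy k
    exact ⟨y, this, by simp [hε.le]⟩

lemma haus_incr (P : ℕ → Set α) (hinc : ∀ k, P k ⊆ P (k+1))
    (hL : IsCompact (closure (⋃ j, P j))) :
    Tendsto (fun k => hausdorffDist (P k) (closure (⋃ j, P j))) atTop (nhds 0) := by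
  set L := closure (⋃ j, P j) with hLdef
  have hmono : ∀ {j k}, j ≤ k → P j ⊆ P k := fun {j k} h =>
    monotone_nat_of_le_succ hinc h
  apply tendsto_haus_of_key
  intro ε hε
  have hcover : L ⊆ ⋃ k, thickening ε (P k) := by
    intro x hx
    obtain ⟨y, hy, hd⟩ := Metric.mem_closure_iff.1 hx ε hε
    obtain ⟨k, hk⟩ := Set.mem_iUnion.1 hy
    exact Set.mem_iUnion.2 ⟨k, mem_thickening_iff.2 ⟨y, hk, hd⟩⟩
  obtain ⟨N, hN⟩ := hL.elim_directed_cover (fun k => thickening ε (P k))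
    (fun k => isOpen_thickening) hcover
    (Monotone.directed_le fun j k h => thickening_subset_of_subset ε (hmono h))
  refine ⟨N, fun k hk => ?_⟩
  apply hausdorffDist_le_of_mem_dist hε.le
  · intro x hx
    refine ⟨x, subset_closure (Set.mem_iUnion.2 ⟨k, hx⟩), by simp [hε.le]⟩
  · intro y hy
    have : y ∈ thickening ε (P N) := hN hy
    rw [mem_thickening_iff] at this
    obtain ⟨z, hz, hd⟩ := this
    exact ⟨z, hmono hk hz, hd.le⟩

end HausdorffLemmas

/-! ### A contractive invariant set for a power-convergent operator -/

section Contractive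

variable {F : Type*} [NormedAddCommGroup F] [NormedSpace ℝ F]

lemma exists_contractive_set (T : F →L[ℝ] F)
    (h : Tendsto (fun k : ℕ => ‖T ^ k‖) atTop (nhds 0)) :
    ∃ (μ c : ℝ) (Einv : Set F), 0 < μ ∧ μ < 1 ∧ 1 ≤ c ∧
      Metric.closedBall 0 1 ⊆ Einv ∧ Einv ⊆ Metric.closedBall 0 c ∧
      (∀ x ∈ Einv, ∃ y ∈ Einv, T x = μ • y) := by
  obtain ⟨N0, hN0⟩ := (Metric.tendsto_atTop.1 h) (1/2) (by norm_num)
  set N := N0 + 1 with hNdef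
  have hNpos : 0 < N := Nat.succ_pos _
  have hTN : ‖T ^ N‖ ≤ 1/2 := by
    have := hN0 N (Nat.le_succ _)
    rw [Real.dist_eq, sub_zero, abs_of_nonneg (norm_nonneg _)] at this
    linarith
  set μ : ℝ := (1/2 : ℝ) ^ ((N : ℝ)⁻¹) with hμdef
  have hμpos : 0 < μ := Real.rpow_pos_of_pos (by norm_num) _
  have hμlt : μ < 1 := by
    apply Real.rpow_lt_one (by norm_num) (by norm_num)
    positivity
  have hμN : μ ^ N = 1/2 := by
    rw [hμdef, ← Real.rpow_natCast ((1/2 : ℝ) ^ ((N : ℝ)⁻¹)) N, ← Real.rpow_mul (by norm_num)]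
    rw [inv_mul_cancel₀ (by positivity), Real.rpow_one]
  set c : ℝ := 1 + (Finset.range N).sum (fun r => ‖T ^ r‖ / μ ^ r) with hcdef
  have hsum0 : (0:ℝ) ≤ (Finset.range N).sum (fun r => ‖T ^ r‖ / μ ^ r) :=
    Finset.sum_nonneg fun r _ => by positivity
  have hc1 : (1 : ℝ) ≤ c := by rw [hcdef]; linarith
  have hcr : ∀ r < N, ‖T ^ r‖ ≤ c * μ ^ r := by
    intro r hr
    have h1 : ‖T ^ r‖ / μ ^ r ≤ (Finset.range N).sum (fun r => ‖T ^ r‖ / μ ^ r) :=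
      Finset.single_le_sum (f := fun r => ‖T ^ r‖ / μ ^ r)
        (fun i _ => by positivity) (Finset.mem_range.2 hr)
    have h2 : ‖T ^ r‖ / μ ^ r ≤ c := by rw [hcdef]; linarith
    calc ‖T ^ r‖ = ‖T ^ r‖ / μ ^ r * μ ^ r := by field_simp
      _ ≤ c * μ ^ r := by gcongr
  have hck : ∀ k, ‖T ^ k‖ ≤ c * μ ^ k := by
    intro k
    rcases Nat.lt_or_ge k N with hkN | hkN
    · exact hcr k hkN
    have hq : 0 < k / N := Nat.div_pos hkN hNpos
    have hdm : N * (k / N) + k % N = k := Nat.div_add_mod k N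
    have hsplit : T ^ k = (T ^ N) ^ (k / N) * T ^ (k % N) := by
      rw [← pow_mul, ← pow_add, hdm]
    have h1 : ‖T ^ k‖ ≤ ‖T ^ N‖ ^ (k / N) * ‖T ^ (k % N)‖ := by
      rw [hsplit]
      calc ‖(T ^ N) ^ (k / N) * T ^ (k % N)‖
          ≤ ‖(T ^ N) ^ (k / N)‖ * ‖T ^ (k % N)‖ := norm_mul_le _ _
        _ ≤ ‖T ^ N‖ ^ (k / N) * ‖T ^ (k % N)‖ := by
            gcongr
            exact norm_pow_le' _ hq
    have h2 : ‖T ^ (k % N)‖ ≤ c * μ ^ (k % N) := hcr _ (Nat.mod_lt _ hNpos)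
    have h3 : ‖T ^ N‖ ^ (k / N) ≤ (μ ^ N) ^ (k / N) := by
      rw [hμN]; gcongr
    calc ‖T ^ k‖ ≤ ‖T ^ N‖ ^ (k / N) * ‖T ^ (k % N)‖ := h1
      _ ≤ (μ ^ N) ^ (k / N) * (c * μ ^ (k % N)) := by
          apply mul_le_mul h3 h2 (norm_nonneg _) (by positivity)
      _ = c * μ ^ k := by rw [← pow_mul, mul_left_comm, ← pow_add, hdm]
  refine ⟨μ, c, {x : F | ∀ k : ℕ, ‖(T ^ k) x‖ ≤ c * μ ^ k}, hμpos, hμlt, hc1, ?_, ?_, ?_⟩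
  · intro x hx k
    have hx1 : ‖x‖ ≤ 1 := by simpa using hx
    calc ‖(T ^ k) x‖ ≤ ‖T ^ k‖ * ‖x‖ := (T ^ k).le_opNorm x
      _ ≤ (c * μ ^ k) * 1 := by
          apply mul_le_mul (hck k) hx1 (norm_nonneg _) (by positivity)
      _ = c * μ ^ k := by ring
  · intro x hx
    have := hx 0
    simpa using this
  · intro x hx
    refine ⟨μ⁻¹ • T x, ?_, by rw [smul_inv_smul₀ hμpos.ne']⟩
    intro k
    have h1 : (T ^ k) (μ⁻¹ • T x) = μ⁻¹ • (T ^ (k+1)) x := by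
      rw [_root_.map_smul, pow_succ]
      rfl
    rw [h1, norm_smul, norm_inv, Real.norm_eq_abs, abs_of_pos hμpos]
    rw [inv_mul_le_iff₀ hμpos]
    calc ‖(T ^ (k+1)) x‖ ≤ c * μ ^ (k+1) := hx (k+1)
      _ = μ * (c * μ ^ k) := by ring

end Contractive

/-! ### Matrix/operator bridging lemmas -/

lemma tendsto_clm_pow (Acl : Matrix (Fin n) (Fin n) ℝ)
    (h : Tendsto (fun k : ℕ => Acl ^ k) atTop (nhds 0)) :
    Tendsto (fun k : ℕ => ‖(Matrix.toEuclideanCLM (𝕜 := ℝ) Acl) ^ k‖) atTop (nhds 0) := by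
  have hφcont : Continuous (fun M : Matrix (Fin n) (Fin n) ℝ =>
      Matrix.toEuclideanCLM (𝕜 := ℝ) M) := by
    have : IsLinearMap ℝ (fun M : Matrix (Fin n) (Fin n) ℝ =>
        Matrix.toEuclideanCLM (𝕜 := ℝ) M) := ⟨fun a b => map_add _ a b, fun c a => map_smul _ c a⟩
    exact LinearMap.continuous_of_finiteDimensional this.mk'
  have h2 : Tendsto (fun k : ℕ => Matrix.toEuclideanCLM (𝕜 := ℝ) (Acl ^ k)) atTop (nhds 0) := by
    have h' := (hφcont.tendsto 0).comp h
    have h0 : Matrix.toEuclideanCLM (𝕜 := ℝ) (0 : Matrix (Fin n) (Fin n) ℝ) = 0 := map_zero _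
    rw [h0] at h'
    exact h'
  have h3 : ∀ k : ℕ, Matrix.toEuclideanCLM (𝕜 := ℝ) (Acl ^ k) =
      (Matrix.toEuclideanCLM (𝕜 := ℝ) Acl) ^ k := fun k => map_pow _ _ _
  simp only [h3] at h2
  have := h2.norm
  rwa [norm_zero] at this

lemma inner_Mtr (A : Matrix (Fin n) (Fin n) ℝ) (B : Matrix (Fin n) (Fin m) ℝ)
    (w : Rsp2 n m) (p : Rsp n) :
    (inner ℝ w (Mtr A B p) : ℝ) = inner ℝ (Mfwd A B w) p := by
  have hA : (inner ℝ w.ofLp.1 (Matrix.toEuclideanLin Aᵀ p) : ℝ)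
      = inner ℝ (Matrix.toEuclideanLin A w.ofLp.1) p := by
    rw [← Matrix.conjTranspose_eq_transpose_of_trivial,
      Matrix.toEuclideanLin_conjTranspose_eq_adjoint]
    exact LinearMap.adjoint_inner_right _ _ _
  have hB : (inner ℝ w.ofLp.2 (Matrix.toEuclideanLin Bᵀ p) : ℝ)
      = inner ℝ (Matrix.toEuclideanLin B w.ofLp.2) p := by
    rw [← Matrix.conjTranspose_eq_transpose_of_trivial,
      Matrix.toEuclideanLin_conjTranspose_eq_adjoint]
    exact LinearMap.adjoint_inner_right _ _ _
  rw [Mfwd, inner_add_left, ← hA, ← hB]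
  rfl

lemma Mfwd_closed_loop (A : Matrix (Fin n) (Fin n) ℝ) (B : Matrix (Fin n) (Fin m) ℝ)
    (K : Matrix (Fin m) (Fin n) ℝ) (x : Rsp n) :
    Mfwd A B (WithLp.toLp 2 (x, Matrix.toEuclideanLin K x)) =
      Matrix.toEuclideanCLM (𝕜 := ℝ) (A + B * K) x := by
  have hcoe : (Matrix.toEuclideanCLM (𝕜 := ℝ) (A + B * K)) x
      = Matrix.toEuclideanLin (A + B * K) x := rfl
  rw [hcoe, map_add]
  have : Matrix.toEuclideanLin (B * K) x
      = Matrix.toEuclideanLin B (Matrix.toEuclideanLin K x) := by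
    rw [Matrix.toEuclideanLin_apply, Matrix.toEuclideanLin_apply, Matrix.toEuclideanLin_apply]
    simp [Matrix.mulVec_mulVec]
  rw [LinearMap.add_apply, this]
  rfl

def PxCLM : Rsp2 n m →L[ℝ] Rsp n :=
  (ContinuousLinearMap.fst ℝ (Rsp n) (Rsp m)).comp
    ((WithLp.prodContinuousLinearEquiv 2 ℝ (Rsp n) (Rsp m)) : Rsp2 n m →L[ℝ] Rsp n × Rsp m)

lemma Pxproj_eq : (Pxproj : Rsp2 n m → Rsp n) = ⇑(PxCLM (n := n) (m := m)) := rfl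

lemma norm_fst_le_rsp2 (w : Rsp2 n m) : ‖w.ofLp.1‖ ≤ ‖w‖ := by
  have h : ‖w‖ ^ 2 = ‖w.ofLp.1‖ ^ 2 + ‖w.ofLp.2‖ ^ 2 := WithLp.prod_norm_sq_eq_of_L2 w
  nlinarith [norm_nonneg w, norm_nonneg w.ofLp.1, norm_nonneg w.ofLp.2]

lemma norm_rsp2_le (w : Rsp2 n m) : ‖w‖ ≤ ‖w.ofLp.1‖ + ‖w.ofLp.2‖ := by
  have h : ‖w‖ ^ 2 = ‖w.ofLp.1‖ ^ 2 + ‖w.ofLp.2‖ ^ 2 := WithLp.prod_norm_sq_eq_of_L2 w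
  nlinarith [norm_nonneg w, norm_nonneg w.ofLp.1, norm_nonneg w.ofLp.2]

/-- Helper: the element (x,y) of the L²-product. -/
def wpair (x : Rsp n) (y : Rsp m) : Rsp2 n m := (WithLp.equiv 2 (Rsp n × Rsp m)).symm (x, y)

lemma wpair_fst (x : Rsp n) (y : Rsp m) : (wpair x y).ofLp.1 = x := rfl

lemma Pxproj_wpair (x : Rsp n) (y : Rsp m) : Pxproj (wpair x y) = x := rfl

lemma Mfwd_closed_loop' (A : Matrix (Fin n) (Fin n) ℝ) (B : Matrix (Fin n) (Fin m) ℝ)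
    (K : Matrix (Fin m) (Fin n) ℝ) (x : Rsp n) :
    Mfwd A B (wpair x (Matrix.toEuclideanLin K x)) =
      Matrix.toEuclideanCLM (𝕜 := ℝ) (A + B * K) x :=
  Mfwd_closed_loop A B K x

set_option maxHeartbeats 1000000 in
/-- under strict stabilizability and a monotonicity condition on the
initial condition, the iterates converge in Hausdorff distance to a proper C-set. -/
theorem stmt_14 (n m : ℕ) (A : Matrix (Fin n) (Fin n) ℝ) (B : Matrix (Fin n) (Fin m) ℝ)
    (hstab : ∃ K : Matrix (Fin m) (Fin n) ℝ,
      Tendsto (fun k : ℕ => (A + B * K) ^ k) atTop (nhds 0))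
    (C : Set (Rsp2 n m)) (hC : IsProperCSet C)
    (S : Set (Rsp n)) (hS : IsCSet S)
    (P : ℕ → Set (Rsp n))
    (hP0 : P 0 = Pxproj '' polarSet (polarSet C + Mtr A B '' S))
    (hPs : ∀ k : ℕ, P (k + 1) = Pxproj '' polarSet (polarSet C + Mtr A B '' polarSet (P k)))
    (hmono : S ⊆ polarSet (P 0) ∨ polarSet (P 0) ⊆ S) :
    ∃ Pinf : Set (Rsp n), IsProperCSet Pinf ∧
      Tendsto (fun k : ℕ => Metric.hausdorffDist (P k) Pinf) atTop (nhds 0) := by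
  obtain ⟨K, hK⟩ := hstab
  obtain ⟨⟨hCcpt, hCconv, hC0⟩, hCint⟩ := hC
  obtain ⟨hScpt, hSconv, hS0⟩ := hS
  -- radii for C
  obtain ⟨R0, hR0⟩ := hCcpt.isBounded.subset_closedBall 0
  set RC : ℝ := max R0 1 with hRCdef
  have hRCpos : (0:ℝ) < RC := lt_of_lt_of_le one_pos (le_max_right _ _)
  have hCsub : C ⊆ Metric.closedBall 0 RC :=
    hR0.trans (Metric.closedBall_subset_closedBall (le_max_left _ _))
  obtain ⟨r0, hr0pos, hr0⟩ := Metric.isOpen_iff.1 isOpen_interior 0 hCint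
  have hrCsub : Metric.closedBall (0 : Rsp2 n m) (r0/2) ⊆ C := by
    refine subset_trans ?_ (interior_subset)
    refine subset_trans ?_ hr0
    exact Metric.closedBall_subset_ball (by linarith)
  set rC : ℝ := r0/2 with hrCdef
  have hrCpos : (0:ℝ) < rC := by positivity
  -- structure of each iterate
  have hstruct : ∀ X : Set (Rsp n), (0:Rsp n) ∈ X →
      IsCompact (Pxproj '' polarSet (polarSet C + Mtr A B '' X)) ∧
      Convex ℝ (Pxproj '' polarSet (polarSet C + Mtr A B '' X)) ∧
      (0:Rsp n) ∈ Pxproj '' polarSet (polarSet C + Mtr A B '' X) ∧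
      Pxproj '' polarSet (polarSet C + Mtr A B '' X) ⊆ Metric.closedBall 0 RC := by
    intro X hX0
    set Q : Set (Rsp2 n m) := polarSet C + Mtr A B '' X with hQdef
    have hpolarCQ : polarSet C ⊆ Q := by
      intro q hq
      have h0 : (0 : Rsp2 n m) ∈ Mtr A B '' X := by
        refine ⟨0, hX0, ?_⟩
        simp [Mtr]
      have := Set.add_mem_add hq h0
      simpa using this
    have hQball : Metric.closedBall (0 : Rsp2 n m) (1/RC) ⊆ Q :=
      (closedBall_subset_polarSet hRCpos hCsub).trans hpolarCQ
    have hpQsub : polarSet Q ⊆ Metric.closedBall 0 RC := by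
      have := polarSet_subset_closedBall (by positivity : (0:ℝ) < 1/RC) hQball
      rwa [one_div_one_div] at this
    have hpQcpt : IsCompact (polarSet Q) :=
      (isCompact_closedBall _ _).of_isClosed_subset (polarSet_closed _) hpQsub
    refine ⟨?_, ?_, ?_, ?_⟩
    · rw [Pxproj_eq]; exact hpQcpt.image PxCLM.continuous
    · rw [Pxproj_eq]; exact (polarSet_convex Q).linear_image PxCLM.toLinearMap
    · exact ⟨0, zero_mem_polarSet Q, rfl⟩
    · rintro x ⟨w, hw, rfl⟩
      have h1 : ‖w‖ ≤ RC := by simpa using hpQsub hw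
      have h2 : ‖Pxproj w‖ ≤ ‖w‖ := norm_fst_le_rsp2 w
      simp only [Metric.mem_closedBall, dist_zero_right]
      linarith
  have hPk : ∀ k, IsCompact (P k) ∧ Convex ℝ (P k) ∧ (0:Rsp n) ∈ P k ∧
      P k ⊆ Metric.closedBall 0 RC := by
    intro k
    cases k with
    | zero => rw [hP0]; exact hstruct S hS0
    | succ k => rw [hPs k]; exact hstruct (polarSet (P k)) (zero_mem_polarSet _)
  -- monotonicity of the iteration map
  have hstep : ∀ {X Y : Set (Rsp n)}, X ⊆ Y →
      Pxproj '' polarSet (polarSet C + Mtr A B '' Y) ⊆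
      Pxproj '' polarSet (polarSet C + Mtr A B '' X) :=
    fun {X Y} h => Set.image_mono (polarSet_antitone
      (Set.add_subset_add_left (Set.image_mono h)))
  -- the contractive invariant set
  obtain ⟨μ, c, Einv, hμpos, hμlt, hc1, hball, hEb, hinv⟩ :=
    exists_contractive_set (Matrix.toEuclideanCLM (𝕜 := ℝ) (A + B * K)) (tendsto_clm_pow _ hK)
  -- control gain as operator
  obtain ⟨κ0, hκ0⟩ :=
    (LinearMap.toContinuousLinearMap (Matrix.toEuclideanLin (𝕜 := ℝ) K)).isBoundedLinearMap.bound
  set κ : ℝ := 1 + max κ0 0 with hκdef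
  have hκpos : (0:ℝ) < κ := by
    have : (0:ℝ) ≤ max κ0 0 := le_max_right _ _
    rw [hκdef]; linarith
  have hwbound : ∀ x : Rsp n, ‖(wpair x ((Matrix.toEuclideanLin (𝕜 := ℝ) K x)))‖ ≤ κ * ‖x‖ := by
    intro x
    have h1 : ‖(wpair x ((Matrix.toEuclideanLin (𝕜 := ℝ) K x)))‖ ≤ ‖x‖ + ‖(Matrix.toEuclideanLin (𝕜 := ℝ) K x)‖ := norm_rsp2_le _
    have h2 : ‖(Matrix.toEuclideanLin (𝕜 := ℝ) K x)‖ ≤ κ0 * ‖x‖ := hκ0.2 x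
    have h3 : κ0 * ‖x‖ ≤ max κ0 0 * ‖x‖ := by
      apply mul_le_mul_of_nonneg_right (le_max_left _ _) (norm_nonneg _)
    rw [hκdef]
    nlinarith [norm_nonneg x]
  -- bound for polar of C
  have hpolarC_bdd : polarSet C ⊆ Metric.closedBall 0 (1/rC) :=
    polarSet_subset_closedBall hrCpos hrCsub
  set Rpc : ℝ := 1/rC with hRpcdef
  have hRpcpos : (0:ℝ) < Rpc := by positivity
  -- bound for S
  obtain ⟨R1, hR1⟩ := hScpt.isBounded.subset_closedBall 0
  set RS : ℝ := max R1 1 with hRSdef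
  have hRSpos : (0:ℝ) < RS := lt_of_lt_of_le one_pos (le_max_right _ _)
  have hSsub : S ⊆ Metric.closedBall 0 RS :=
    hR1.trans (Metric.closedBall_subset_closedBall (le_max_left _ _))
  -- choose ε
  set ε : ℝ := min ((1-μ) / (κ * c * Rpc + 1)) (1 / (c * RS + 1)) with hεdef
  have hεpos : 0 < ε := by
    apply lt_min
    · apply div_pos (by linarith) (by positivity)
    · apply div_pos one_pos (by positivity)
  -- key inequality (i)
  have hkey1 : ∀ e ∈ Einv, ∀ q ∈ polarSet C, (inner ℝ (wpair (ε • e) ((Matrix.toEuclideanLin (𝕜 := ℝ) K (ε • e)))) q : ℝ) ≤ 1 - μ := by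
    intro e he q hq
    have he' : ‖e‖ ≤ c := by simpa using hEb he
    have hq' : ‖q‖ ≤ Rpc := by simpa using hpolarC_bdd hq
    have h2 : ‖ε • e‖ ≤ ε * c := by
      rw [norm_smul, Real.norm_eq_abs, abs_of_pos hεpos]
      exact mul_le_mul_of_nonneg_left he' hεpos.le
    have h1 : ‖(wpair (ε • e) ((Matrix.toEuclideanLin (𝕜 := ℝ) K (ε • e))))‖ ≤ κ * (ε * c) :=
      le_trans (hwbound (ε • e)) (mul_le_mul_of_nonneg_left h2 hκpos.le)
    have hεle : ε ≤ (1-μ) / (κ * c * Rpc + 1) := min_le_left _ _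
    calc (inner ℝ (wpair (ε • e) ((Matrix.toEuclideanLin (𝕜 := ℝ) K (ε • e)))) q : ℝ)
        ≤ ‖(wpair (ε • e) ((Matrix.toEuclideanLin (𝕜 := ℝ) K (ε • e))))‖ * ‖q‖ := real_inner_le_norm _ _
      _ ≤ (κ * (ε * c)) * Rpc := by
          apply mul_le_mul h1 hq' (norm_nonneg _) (by positivity)
      _ = ε * (κ * c * Rpc) := by ring
      _ ≤ ((1-μ) / (κ * c * Rpc + 1)) * (κ * c * Rpc) := by
          apply mul_le_mul_of_nonneg_right hεle (by positivity)
      _ ≤ 1 - μ := by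
          rw [div_mul_eq_mul_div, div_le_iff₀ (by positivity)]
          nlinarith [hκpos, hRpcpos]
  -- key: T (ε • e) = μ • (ε • y)
  have hTsmul : ∀ e ∈ Einv, ∃ y ∈ Einv,
      (Matrix.toEuclideanCLM (𝕜 := ℝ) (A + B * K)) (ε • e) = μ • (ε • y) := by
    intro e he
    obtain ⟨y, hy, hTy⟩ := hinv e he
    exact ⟨y, hy, by rw [_root_.map_smul, hTy, smul_comm]⟩
  -- key inequality (ii): against elements of S
  have hkey2 : ∀ e ∈ Einv, ∀ s ∈ S,
      (inner ℝ ((Matrix.toEuclideanCLM (𝕜 := ℝ) (A + B * K)) (ε • e)) s : ℝ) ≤ μ := by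
    intro e he s hs
    obtain ⟨y, hy, hTy⟩ := hTsmul e he
    have hy' : ‖y‖ ≤ c := by simpa using hEb hy
    have hs' : ‖s‖ ≤ RS := by simpa using hSsub hs
    have hn : ‖(Matrix.toEuclideanCLM (𝕜 := ℝ) (A + B * K)) (ε • e)‖ ≤ μ * (ε * c) := by
      rw [hTy, norm_smul, norm_smul, Real.norm_eq_abs, Real.norm_eq_abs,
        abs_of_pos hμpos, abs_of_pos hεpos]
      gcongr
    have hεle : ε ≤ 1 / (c * RS + 1) := min_le_right _ _
    calc (inner ℝ ((Matrix.toEuclideanCLM (𝕜 := ℝ) (A + B * K)) (ε • e)) s : ℝ)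
        ≤ ‖(Matrix.toEuclideanCLM (𝕜 := ℝ) (A + B * K)) (ε • e)‖ * ‖s‖ := real_inner_le_norm _ _
      _ ≤ (μ * (ε * c)) * RS := by
          apply mul_le_mul hn hs' (norm_nonneg _) (by positivity)
      _ = μ * (ε * (c * RS)) := by ring
      _ ≤ μ * ((1 / (c * RS + 1)) * (c * RS)) := by
          apply mul_le_mul_of_nonneg_left ?_ hμpos.le
          apply mul_le_mul_of_nonneg_right hεle (by positivity)
      _ ≤ μ * 1 := by
          apply mul_le_mul_of_nonneg_left ?_ hμpos.le
          rw [div_mul_eq_mul_div, div_le_iff₀ (by positivity)]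
          nlinarith [hRSpos, hc1]
      _ = μ := mul_one μ
  -- the invariant set is in every iterate
  have hEP : ∀ k, ∀ e ∈ Einv, ε • e ∈ P k := by
    intro k
    induction k with
    | zero =>
      intro e he
      rw [hP0]
      refine ⟨(wpair (ε • e) ((Matrix.toEuclideanLin (𝕜 := ℝ) K (ε • e)))), ?_, rfl⟩
      intro z hz
      rcases Set.mem_add.1 hz with ⟨q, hq, t, ⟨s, hs, rfl⟩, rfl⟩
      rw [inner_add_right, inner_Mtr]
      have h1 := hkey1 e he q hq
      have h2 : (inner ℝ (Mfwd A B (wpair (ε • e) ((Matrix.toEuclideanLin (𝕜 := ℝ) K (ε • e))))) s : ℝ) ≤ μ := by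
        rw [Mfwd_closed_loop' A B K (ε • e)]
        exact hkey2 e he s hs
      linarith
    | succ k ih =>
      intro e he
      rw [hPs k]
      refine ⟨(wpair (ε • e) ((Matrix.toEuclideanLin (𝕜 := ℝ) K (ε • e)))), ?_, rfl⟩
      intro z hz
      rcases Set.mem_add.1 hz with ⟨q, hq, t, ⟨p, hp, rfl⟩, rfl⟩
      rw [inner_add_right, inner_Mtr]
      have h1 := hkey1 e he q hq
      have h2 : (inner ℝ (Mfwd A B (wpair (ε • e) ((Matrix.toEuclideanLin (𝕜 := ℝ) K (ε • e))))) p : ℝ) ≤ μ := by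
        rw [Mfwd_closed_loop' A B K (ε • e)]
        obtain ⟨y, hy, hTy⟩ := hTsmul e he
        rw [hTy]
        have hyP : ε • y ∈ P k := ih y hy
        have := hp _ hyP
        rw [real_inner_smul_left]
        rw [real_inner_comm]
        nlinarith
      linarith
  -- ball inside every iterate
  have hballP : ∀ k, Metric.closedBall (0:Rsp n) ε ⊆ P k := by
    intro k z hz
    have hz' : ‖z‖ ≤ ε := by simpa using hz
    have he : ε⁻¹ • z ∈ Einv := by
      apply hball
      simp only [Metric.mem_closedBall, dist_zero_right, norm_smul, norm_inv,
        Real.norm_eq_abs, abs_of_pos hεpos]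
      rw [inv_mul_le_iff₀ hεpos]
      linarith
    have := hEP k _ he
    rwa [smul_inv_smul₀ hεpos.ne'] at this
  have hint : ∀ L : Set (Rsp n), Metric.closedBall (0:Rsp n) ε ⊆ L → (0:Rsp n) ∈ interior L := by
    intro L hL
    have : Metric.ball (0:Rsp n) ε ⊆ L := (Metric.ball_subset_closedBall).trans hL
    exact interior_maximal this Metric.isOpen_ball (Metric.mem_ball_self hεpos)
  -- case split on monotonicity
  rcases hmono with hmS | hmS
  · -- decreasing case
    have hdec : ∀ k, P (k+1) ⊆ P k := by
      intro k
      induction k with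
      | zero =>
        have h := hstep hmS
        rw [← hPs 0, ← hP0] at h
        exact h
      | succ k ih =>
        have h := hstep (polarSet_antitone ih)
        rw [← hPs (k+1), ← hPs k] at h
        exact h
    refine ⟨⋂ j, P j, ⟨⟨?_, ?_, ?_⟩, ?_⟩, ?_⟩
    · exact (hPk 0).1.of_isClosed_subset
        (isClosed_iInter fun j => (hPk j).1.isClosed) (Set.iInter_subset _ 0)
    · exact convex_iInter fun j => (hPk j).2.1
    · exact Set.mem_iInter.2 fun j => (hPk j).2.2.1
    · exact hint _ (Set.subset_iInter fun j => hballP j)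
    · exact haus_decr P (fun k => (hPk k).1) (fun k => ⟨0, (hPk k).2.2.1⟩) hdec
  · -- increasing case
    have hinc : ∀ k, P k ⊆ P (k+1) := by
      intro k
      induction k with
      | zero =>
        have h := hstep hmS
        rw [← hPs 0, ← hP0] at h
        exact h
      | succ k ih =>
        have h := hstep (polarSet_antitone ih)
        rw [← hPs (k+1), ← hPs k] at h
        exact h
    have hUsub : closure (⋃ j, P j) ⊆ Metric.closedBall 0 RC := by
      apply closure_minimal ?_ Metric.isClosed_closedBall
      exact Set.iUnion_subset fun j => (hPk j).2.2.2
    have hUcpt : IsCompact (closure (⋃ j, P j)) :=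
      (isCompact_closedBall _ _).of_isClosed_subset isClosed_closure hUsub
    have hmonoP : ∀ {j k}, j ≤ k → P j ⊆ P k := fun {j k} h =>
      monotone_nat_of_le_succ hinc h
    refine ⟨closure (⋃ j, P j), ⟨⟨hUcpt, ?_, ?_⟩, ?_⟩, ?_⟩
    · apply Convex.closure
      intro x hx y hy a b ha hb hab
      obtain ⟨j, hj⟩ := Set.mem_iUnion.1 hx
      obtain ⟨l, hl⟩ := Set.mem_iUnion.1 hy
      have hj' : x ∈ P (max j l) := hmonoP (le_max_left _ _) hj
      have hl' : y ∈ P (max j l) := hmonoP (le_max_right _ _) hl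
      exact Set.mem_iUnion.2 ⟨max j l, (hPk (max j l)).2.1 hj' hl' ha hb hab⟩
    · exact subset_closure (Set.mem_iUnion.2 ⟨0, (hPk 0).2.2.1⟩)
    · exact hint _ ((hballP 0).trans (subset_closure.trans' (Set.subset_iUnion P 0)))
    · exact haus_incr P hinc hUcpt
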